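/- Let ξ0 ∈ ℝ with 0 < r_min < |ξ0| < r_max, and for k ≥ 1 set Λ(t)^k = e^{2kt}(ξ0² + (1 − ξ0²)e^{−2t})^{3k/2}. Then lim_{t→∞} Λ(t)^{−k} ∫₀ᵗ Λ(s)^k ds = 1/(2k). -/

import Mathlib

open Real Filter MeasureTheory intervalIntegral Set

set_option maxHeartbeats 1000000 in
/-- limit of the weighted averages of powers of the integrating factor. -/
theorem stmt4 (ξ0 r_min r_max : ℝ) (h0 : 0 < r_min) (h1 : r_min < |ξ0|)
    (h2 : |ξ0| < r_max)
    (Λ : ℝ → ℝ)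
    (hΛ : ∀ t : ℝ, Λ t =
      Real.exp (2 * t) * (ξ0 ^ 2 + (1 - ξ0 ^ 2) * Real.exp (-2 * t)) ^ ((3:ℝ)/2))
    (k : ℕ) (hk : 1 ≤ k) :
    Filter.Tendsto (fun t : ℝ => (Λ t ^ k)⁻¹ * ∫ s in (0:ℝ)..t, Λ s ^ k)
      Filter.atTop (nhds (1 / (2 * k))) := by
  have hξ : ξ0 ≠ 0 := by
    intro h; rw [h, abs_zero] at h1; linarith
  have hb : 0 < ξ0 ^ 2 := by positivity
  set g : ℝ → ℝ := fun t => ξ0 ^ 2 + (1 - ξ0 ^ 2) * Real.exp (-2 * t) with hgdef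
  set p : ℝ := (3/2 : ℝ) * k with hpdef
  have hk1 : (1:ℝ) ≤ (k:ℝ) := by exact_mod_cast hk
  have hp1 : (1:ℝ) ≤ p := by rw [hpdef]; nlinarith
  have hp0 : (0:ℝ) ≤ p := by linarith
  have hpm : (0:ℝ) ≤ p - 1 := by linarith
  set a : ℝ := 2 * (k:ℝ) with hadef
  have ha2 : (2:ℝ) ≤ a := by rw [hadef]; nlinarith
  have ha0 : (0:ℝ) < a := by linarith
  -- bounds on g on [0, ∞)
  set m : ℝ := min (ξ0 ^ 2) 1 with hmdef
  set M : ℝ := max (ξ0 ^ 2) 1 with hMdef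
  have hm0 : 0 < m := lt_min hb one_pos
  have hgl : ∀ t : ℝ, 0 ≤ t → m ≤ g t := by
    intro t ht
    have he0 : 0 < Real.exp (-2 * t) := Real.exp_pos _
    have he1 : Real.exp (-2 * t) ≤ 1 := by
      rw [Real.exp_le_one_iff]; linarith
    have h1' : m ≤ ξ0 ^ 2 := min_le_left _ _
    have h2' : m ≤ 1 := min_le_right _ _
    have key : 0 ≤ (ξ0 ^ 2 - m) * (1 - Real.exp (-2 * t)) + (1 - m) * Real.exp (-2 * t) := by
      have := mul_nonneg (sub_nonneg.mpr h1') (sub_nonneg.mpr he1)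
      have := mul_nonneg (sub_nonneg.mpr h2') he0.le
      linarith
    simp only [hgdef]; nlinarith
  have hgu : ∀ t : ℝ, 0 ≤ t → g t ≤ M := by
    intro t ht
    have he0 : 0 < Real.exp (-2 * t) := Real.exp_pos _
    have he1 : Real.exp (-2 * t) ≤ 1 := by
      rw [Real.exp_le_one_iff]; linarith
    have h1' : ξ0 ^ 2 ≤ M := le_max_left _ _
    have h2' : (1:ℝ) ≤ M := le_max_right _ _
    have key : 0 ≤ (M - ξ0 ^ 2) * (1 - Real.exp (-2 * t)) + (M - 1) * Real.exp (-2 * t) := by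
      have := mul_nonneg (sub_nonneg.mpr h1') (sub_nonneg.mpr he1)
      have := mul_nonneg (sub_nonneg.mpr h2') he0.le
      linarith
    simp only [hgdef]; nlinarith
  have hgpos : ∀ t : ℝ, 0 ≤ t → 0 < g t := fun t ht => lt_of_lt_of_le hm0 (hgl t ht)
  -- continuity of g
  have hgc : Continuous g := by
    simp only [hgdef]
    exact continuous_const.add (continuous_const.mul (Real.continuous_exp.comp (continuous_const.mul continuous_id)))
  have hhc : Continuous (fun t => g t ^ p) := by
    rw [continuous_iff_continuousAt]
    intro x
    exact (Real.continuousAt_rpow_const (g x) p (Or.inr hp0)).comp hgc.continuousAt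
  -- derivative of g
  set G' : ℝ → ℝ := fun s => (1 - ξ0 ^ 2) * (Real.exp (-2 * s) * (-2)) with hG'def
  have hg' : ∀ s : ℝ, HasDerivAt g (G' s) s := by
    intro s
    have h1' : HasDerivAt (fun s : ℝ => -2 * s) (-2) s := by
      simpa using (hasDerivAt_id s).const_mul (-2)
    simpa only [hgdef, hG'def] using
      ((h1'.exp).const_mul (1 - ξ0 ^ 2)).const_add (ξ0 ^ 2)
  have hh' : ∀ s : ℝ, HasDerivAt (fun t => g t ^ p) (G' s * p * g s ^ (p - 1)) s :=
    fun s => (hg' s).rpow_const (Or.inr hp1)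
  -- F and its derivative
  set F : ℝ → ℝ := fun s => Real.exp (a * s) * g s ^ p with hFdef
  set D : ℝ → ℝ := fun s => Real.exp (a * s) * (G' s * p * g s ^ (p - 1)) with hDdef
  have hexp' : ∀ s : ℝ, HasDerivAt (fun s : ℝ => Real.exp (a * s)) (Real.exp (a * s) * a) s := by
    intro s
    have h1' : HasDerivAt (fun s : ℝ => a * s) a s := by
      simpa using (hasDerivAt_id s).const_mul a
    exact h1'.exp
  have hF' : ∀ s : ℝ, HasDerivAt F (Real.exp (a * s) * a * g s ^ p + D s) s := by
    intro s
    exact (hexp' s).mul (hh' s)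
  -- continuity of D and related functions
  have hgpc : Continuous (fun s => g s ^ (p - 1)) := by
    rw [continuous_iff_continuousAt]
    intro x
    exact (Real.continuousAt_rpow_const (g x) (p - 1) (Or.inr hpm)).comp hgc.continuousAt
  have hG'c : Continuous G' := by
    simp only [hG'def]
    exact continuous_const.mul ((Real.continuous_exp.comp (continuous_const.mul continuous_id)).mul continuous_const)
  have hexpc : Continuous (fun s : ℝ => Real.exp (a * s)) :=
    Real.continuous_exp.comp (continuous_const.mul continuous_id)
  have hDc : Continuous D := by
    simp only [hDdef]
    exact hexpc.mul ((hG'c.mul continuous_const).mul hgpc)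
  have hEHc : Continuous (fun s => Real.exp (a * s) * g s ^ p) := hexpc.mul hhc
  -- integration by parts identity
  have key : ∀ t : ℝ, ∫ s in (0:ℝ)..t, Real.exp (a * s) * g s ^ p
      = (F t - F 0 - ∫ s in (0:ℝ)..t, D s) / a := by
    intro t
    have hc1 : Continuous (fun s : ℝ => Real.exp (a * s) * a * g s ^ p) :=
      (hexpc.mul continuous_const).mul hhc
    have hIBP : ∫ s in (0:ℝ)..t, (Real.exp (a * s) * a * g s ^ p + D s) = F t - F 0 :=
      integral_eq_sub_of_hasDerivAt (fun s _ => hF' s)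
        ((hc1.add hDc).intervalIntegrable 0 t)
    have hsplit : ∫ s in (0:ℝ)..t, (Real.exp (a * s) * a * g s ^ p + D s)
        = a * (∫ s in (0:ℝ)..t, Real.exp (a * s) * g s ^ p) + ∫ s in (0:ℝ)..t, D s := by
      rw [intervalIntegral.integral_add (hc1.intervalIntegrable 0 t) (hDc.intervalIntegrable 0 t),
        ← intervalIntegral.integral_const_mul]
      congr 1
      apply intervalIntegral.integral_congr
      intro s _
      ring
    rw [hsplit] at hIBP
    field_simp
    linarith
  -- bound on D
  set Cd : ℝ := 2 * |1 - ξ0 ^ 2| * p * M ^ (p - 1) with hCddef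
  have hM0 : 0 < M := lt_of_lt_of_le one_pos (le_max_right _ _)
  have hCd0 : 0 ≤ Cd := by
    have : (0:ℝ) ≤ M ^ (p - 1) := Real.rpow_nonneg hM0.le _
    have := abs_nonneg (1 - ξ0 ^ 2)
    rw [hCddef]; positivity
  have hDb : ∀ s : ℝ, 0 ≤ s → |D s| ≤ Cd * Real.exp ((a - 1) * s) := by
    intro s hs
    have hgp : (0:ℝ) ≤ g s ^ (p - 1) := Real.rpow_nonneg (hgpos s hs).le _
    have e1 : |D s| = Real.exp (a * s) * (|1 - ξ0 ^ 2| * (Real.exp (-2 * s) * 2)) * p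
        * g s ^ (p - 1) := by
      simp only [hDdef, hG'def, abs_mul, abs_of_pos (Real.exp_pos _), abs_of_nonneg hp0,
        abs_of_nonneg hgp]
      rw [abs_of_nonpos (by norm_num : (-2:ℝ) ≤ 0)]
      ring
    have e2 : Real.exp (a * s) * Real.exp (-2 * s) = Real.exp ((a - 2) * s) := by
      rw [← Real.exp_add]; ring_nf
    have e3 : Real.exp ((a - 2) * s) ≤ Real.exp ((a - 1) * s) := by
      apply Real.exp_le_exp.mpr; nlinarith
    have e4 : g s ^ (p - 1) ≤ M ^ (p - 1) :=
      Real.rpow_le_rpow (hgpos s hs).le (hgu s hs) hpm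
    calc |D s| = 2 * |1 - ξ0 ^ 2| * p * (Real.exp (a * s) * Real.exp (-2 * s))
          * g s ^ (p - 1) := by rw [e1]; ring
      _ = 2 * |1 - ξ0 ^ 2| * p * Real.exp ((a - 2) * s) * g s ^ (p - 1) := by rw [e2]
      _ ≤ 2 * |1 - ξ0 ^ 2| * p * Real.exp ((a - 1) * s) * M ^ (p - 1) := by
          have h2' : (0:ℝ) ≤ 2 * |1 - ξ0 ^ 2| * p := by positivity
          gcongr
      _ = Cd * Real.exp ((a - 1) * s) := by rw [hCddef]; ring
  -- bound on the integral of D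
  have ham1 : (1:ℝ) ≤ a - 1 := by linarith
  have ham0 : (0:ℝ) < a - 1 := by linarith
  have hIb : ∀ t : ℝ, 0 ≤ t →
      |∫ s in (0:ℝ)..t, D s| ≤ Cd / (a - 1) * Real.exp ((a - 1) * t) := by
    intro t ht
    have hbc : Continuous (fun s : ℝ => Cd * Real.exp ((a - 1) * s)) :=
      continuous_const.mul (Real.continuous_exp.comp (continuous_const.mul continuous_id))
    have hval : ∫ s in (0:ℝ)..t, Cd * Real.exp ((a - 1) * s)
        = Cd / (a - 1) * Real.exp ((a - 1) * t) - Cd / (a - 1) * Real.exp ((a - 1) * 0) := by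
      apply integral_eq_sub_of_hasDerivAt (f := fun s => Cd / (a - 1) * Real.exp ((a - 1) * s))
      · intro s _
        have h1' : HasDerivAt (fun s : ℝ => (a - 1) * s) (a - 1) s := by
          simpa using (hasDerivAt_id s).const_mul (a - 1)
        have := (h1'.exp).const_mul (Cd / (a - 1))
        refine this.congr_deriv ?_
        rw [div_mul_eq_mul_div, div_eq_iff ham0.ne']
        ring
      · exact hbc.intervalIntegrable 0 t
    have hstep : |∫ s in (0:ℝ)..t, D s| ≤ |∫ s in (0:ℝ)..t, Cd * Real.exp ((a - 1) * s)| := by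
      rw [← Real.norm_eq_abs (∫ s in (0:ℝ)..t, D s)]
      apply intervalIntegral.norm_integral_le_abs_of_norm_le _ (hbc.intervalIntegrable 0 t)
      filter_upwards [ae_restrict_mem measurableSet_uIoc] with s hs
      rw [Set.uIoc_of_le ht] at hs
      exact hDb s hs.1.le
    refine hstep.trans ?_
    rw [hval]
    have he1 : Real.exp ((a - 1) * 0) = 1 := by norm_num
    have he2 : (1:ℝ) ≤ Real.exp ((a - 1) * t) := by
      have h' : (0:ℝ) ≤ (a - 1) * t := by nlinarith
      have := Real.add_one_le_exp ((a - 1) * t)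
      linarith
    have hc : (0:ℝ) ≤ Cd / (a - 1) := by positivity
    rw [he1, abs_of_nonneg (by nlinarith)]
    nlinarith
  -- the error term tends to 0
  have hE : Tendsto (fun t => Real.exp (-(a * t)) * ∫ s in (0:ℝ)..t, D s) atTop (nhds 0) := by
    apply squeeze_zero_norm' (a := fun t => Cd / (a - 1) * Real.exp (-t))
    · filter_upwards [eventually_ge_atTop (0:ℝ)] with t ht
      have : ‖Real.exp (-(a * t)) * ∫ s in (0:ℝ)..t, D s‖
          = Real.exp (-(a * t)) * |∫ s in (0:ℝ)..t, D s| := by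
        rw [Real.norm_eq_abs, abs_mul, abs_of_pos (Real.exp_pos _)]
      rw [this]
      calc Real.exp (-(a * t)) * |∫ s in (0:ℝ)..t, D s|
          ≤ Real.exp (-(a * t)) * (Cd / (a - 1) * Real.exp ((a - 1) * t)) := by
            exact mul_le_mul_of_nonneg_left (hIb t ht) (Real.exp_pos _).le
        _ = Cd / (a - 1) * Real.exp (-t) := by
            rw [← mul_assoc, mul_comm (Real.exp _), mul_assoc, ← Real.exp_add]
            ring_nf
    · have h1' : Tendsto (fun t : ℝ => Real.exp (-t)) atTop (nhds 0) :=
        Real.tendsto_exp_atBot.comp tendsto_neg_atTop_atBot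
      simpa using h1'.const_mul (Cd / (a - 1))
  -- limit of g and h
  have hgt : Tendsto g atTop (nhds (ξ0 ^ 2)) := by
    have h1' : Tendsto (fun t : ℝ => Real.exp (-2 * t)) atTop (nhds 0) := by
      apply Real.tendsto_exp_atBot.comp
      have := Tendsto.const_mul_atTop (two_pos) (tendsto_id (α := ℝ) (x := atTop))
      have h2' : Tendsto (fun t : ℝ => -(2 * t)) atTop atBot := tendsto_neg_atTop_atBot.comp this
      apply h2'.congr
      intro t; ring
    have := (h1'.const_mul (1 - ξ0 ^ 2)).const_add (ξ0 ^ 2)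
    simpa only [hgdef, mul_zero, add_zero] using this
  have hL0 : 0 < (ξ0 ^ 2 : ℝ) ^ p := Real.rpow_pos_of_pos hb p
  have hht : Tendsto (fun t => g t ^ p) atTop (nhds ((ξ0 ^ 2) ^ p)) :=
    ((Real.continuousAt_rpow_const (ξ0 ^ 2) p (Or.inl hb.ne')).tendsto).comp hgt
  have hinvt : Tendsto (fun t => (g t ^ p)⁻¹) atTop (nhds (((ξ0 ^ 2) ^ p)⁻¹)) :=
    hht.inv₀ hL0.ne'
  have hexp0 : Tendsto (fun t : ℝ => Real.exp (-(a * t))) atTop (nhds 0) := by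
    apply Real.tendsto_exp_atBot.comp
    exact tendsto_neg_atTop_atBot.comp (Tendsto.const_mul_atTop ha0 tendsto_id)
  -- limit of the model function φ
  have hφ : Tendsto (fun t => (1 / a) * (1 - F 0 * (Real.exp (-(a * t)) * (g t ^ p)⁻¹)
      - (Real.exp (-(a * t)) * ∫ s in (0:ℝ)..t, D s) * (g t ^ p)⁻¹)) atTop (nhds (1 / a)) := by
    have l1 : Tendsto (fun t => F 0 * (Real.exp (-(a * t)) * (g t ^ p)⁻¹)) atTop (nhds 0) := by
      have := (hexp0.mul hinvt).const_mul (F 0)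
      simpa using this
    have l2 : Tendsto (fun t => (Real.exp (-(a * t)) * ∫ s in (0:ℝ)..t, D s) * (g t ^ p)⁻¹)
        atTop (nhds 0) := by
      have := hE.mul hinvt
      simpa using this
    have := ((tendsto_const_nhds (x := (1:ℝ)) (f := atTop)).sub l1).sub l2
    have := this.const_mul (1 / a)
    simpa using this
  -- conclude via eventual equality
  have hfinal : (fun t : ℝ => (Λ t ^ k)⁻¹ * ∫ s in (0:ℝ)..t, Λ s ^ k) =ᶠ[atTop]
      (fun t => (1 / a) * (1 - F 0 * (Real.exp (-(a * t)) * (g t ^ p)⁻¹)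
      - (Real.exp (-(a * t)) * ∫ s in (0:ℝ)..t, D s) * (g t ^ p)⁻¹)) := by
    filter_upwards [eventually_ge_atTop (0:ℝ)] with t ht
    have hΛk : ∀ u : ℝ, 0 ≤ u → Λ u ^ k = Real.exp (a * u) * g u ^ p := by
      intro u hu
      rw [hΛ u, mul_pow, ← Real.exp_nat_mul,
        ← Real.rpow_natCast ((g u) ^ ((3:ℝ)/2)) k, ← Real.rpow_mul (hgpos u hu).le]
      rw [show (k:ℝ) * (2 * u) = a * u by rw [hadef]; ring]
    have hint : ∫ s in (0:ℝ)..t, Λ s ^ k = ∫ s in (0:ℝ)..t, Real.exp (a * s) * g s ^ p := by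
      apply intervalIntegral.integral_congr
      intro s hs
      rw [Set.uIcc_of_le ht] at hs
      exact hΛk s hs.1
    rw [hΛk t ht, hint, key t]
    have hgtp : g t ^ p ≠ 0 := (Real.rpow_pos_of_pos (hgpos t ht) p).ne'
    have hF0 : F t = Real.exp (a * t) * g t ^ p := rfl
    rw [Real.exp_neg]
    rw [hF0]
    field_simp
    try ring
    try exact Or.inl trivial
  have := hφ.congr' hfinal.symm
  convert this using 2
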